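/- For every real ζ with −1/e < ζ < 0, the sequence p̃_n(ζ) := f̃_n(ζ) + f̃_{n−1}(ζ), where f̃_m(ζ) := Σ_{j=0}^{m} ((j+1)ζ)^{m−j}/(m−j)!, tends to 0 as n → ∞. In particular, there is no uniform positive lower bound on p̃_n(ζ) over n for such ζ, which refutes Buvoli's conjecture that the absolute stability regions of the Adams–Bashforth-type integrator converge, as the order q → ∞, to a limiting region containing the left half-disk of radius 1/e. -/

import Mathlib

open Finset Filter

/-- Real version of `f̃_m(ζ) := Σ_{j=0}^{m} ((j+1)ζ)^{m−j}/(m−j)!`. -/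
noncomputable def ftPolyR (m : ℕ) (ζ : ℝ) : ℝ :=
  ∑ j ∈ range (m + 1),
    (((j + 1 : ℕ) : ℝ) * ζ) ^ (m - j) / ((Nat.factorial (m - j) : ℝ))


noncomputable def Yf (ζ : ℝ) (n : ℕ) (t : ℝ) : ℝ :=
  ∑ k ∈ range (n + 1), ζ ^ k * (t + 1 - (k : ℝ)) ^ k / (Nat.factorial k : ℝ)

lemma Yf_zero (ζ : ℝ) (t : ℝ) : Yf ζ 0 t = 1 := by
  simp [Yf]

lemma Yf_cont (ζ : ℝ) (n : ℕ) : Continuous (fun t => Yf ζ n t) := by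
  unfold Yf
  exact continuous_finset_sum _ (fun k _ => by fun_prop)

lemma Yf_hasDeriv (ζ : ℝ) (n : ℕ) (t : ℝ) :
    HasDerivAt (Yf ζ (n + 1)) (ζ * Yf ζ n (t - 1)) t := by
  have h : ∀ k ∈ range (n + 2),
      HasDerivAt (fun t : ℝ => ζ ^ k * (t + 1 - (k : ℝ)) ^ k / (Nat.factorial k : ℝ))
        (ζ ^ k * ((k : ℝ) * (t + 1 - (k : ℝ)) ^ (k - 1) * 1) / (Nat.factorial k : ℝ)) t := by
    intro k _
    exact ((((hasDerivAt_id t).add_const 1).sub_const (k : ℝ)).pow k).const_mul (ζ ^ k) |>.div_const _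
  have : HasDerivAt (fun y : ℝ => ∑ i ∈ range (n + 2), ζ ^ i * (y + 1 - (i : ℝ)) ^ i / (Nat.factorial i : ℝ)) _ t := HasDerivAt.fun_sum h
  convert this using 1
  · rfl
  rw [Finset.sum_range_succ']
  simp only [Nat.cast_zero, pow_zero, Nat.factorial_zero, zero_mul, mul_zero, one_mul,
    Nat.cast_one, mul_one, zero_div, add_zero]
  rw [Yf, Finset.mul_sum]
  refine Finset.sum_congr rfl (fun k hk => ?_)
  have hf : (Nat.factorial (k + 1) : ℝ) = (k + 1) * Nat.factorial k := by
    push_cast [Nat.factorial_succ]; ring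
  have hfk : (Nat.factorial k : ℝ) ≠ 0 := Nat.cast_ne_zero.mpr (Nat.factorial_ne_zero k)
  have hk1 : ((k : ℝ) + 1) ≠ 0 := by positivity
  simp only [Nat.add_sub_cancel, hf]
  push_cast
  field_simp
  ring

noncomputable def Zf (ζ r : ℝ) (n : ℕ) (t : ℝ) : ℝ := Real.exp (r * t) * Yf ζ n t

noncomputable def Wf (ζ r : ℝ) : ℕ → ℝ → ℝ
  | 0, t => r * Zf ζ r 0 t
  | (n + 1), t => r * (Zf ζ r (n + 1) t - Zf ζ r n (t - 1))

lemma Zf_cont (ζ r : ℝ) (n : ℕ) : Continuous (fun t => Zf ζ r n t) := by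
  unfold Zf
  exact (Real.continuous_exp.comp (continuous_const.mul continuous_id)).mul (Yf_cont ζ n)

lemma Wf_cont (ζ r : ℝ) (n : ℕ) : Continuous (fun t => Wf ζ r n t) := by
  cases n with
  | zero => exact continuous_const.mul (Zf_cont ζ r 0)
  | succ n =>
      exact continuous_const.mul ((Zf_cont ζ r (n+1)).sub
        ((Zf_cont ζ r n).comp (continuous_id.sub continuous_const)))

lemma Zf_hasDeriv (ζ x r : ℝ) (hx : ζ = -x) (hr : x * Real.exp r = r) (n : ℕ) (t : ℝ) :
    HasDerivAt (Zf ζ r n) (Wf ζ r n t) t := by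
  have hexp : HasDerivAt (fun t : ℝ => Real.exp (r * t)) (Real.exp (r * t) * r) t := by
    simpa using (HasDerivAt.exp ((hasDerivAt_id t).const_mul r))
  cases n with
  | zero =>
      have hY : HasDerivAt (Yf ζ 0) 0 t := by
        have : (Yf ζ 0) = fun _ : ℝ => (1:ℝ) := funext fun s => Yf_zero ζ s
        rw [this]; exact hasDerivAt_const t 1
      have : HasDerivAt (Zf ζ r 0) (Real.exp (r * t) * r * Yf ζ 0 t +
          Real.exp (r * t) * 0) t := hexp.mul hY
      simpa [Wf, Zf, Yf_zero, mul_comm] using this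
  | succ n =>
      have : HasDerivAt (Zf ζ r (n+1)) (Real.exp (r * t) * r * Yf ζ (n+1) t +
          Real.exp (r * t) * (ζ * Yf ζ n (t - 1))) t :=
        hexp.mul (Yf_hasDeriv ζ n t)
      convert this using 1
      have hre : r * Real.exp (r * (t - 1)) = x * Real.exp (r * t) := by
        rw [show r * (t-1) = r * t - r by ring, Real.exp_sub]
        nth_rewrite 1 [← hr]
        have h := Real.exp_ne_zero r
        field_simp
      simp only [Wf, Zf]
      rw [mul_sub, show r * (Real.exp (r * (t-1)) * Yf ζ n (t-1))
        = (r * Real.exp (r * (t-1))) * Yf ζ n (t-1) by ring, hre, hx]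
      ring

lemma Zf_ftc (ζ x r : ℝ) (hx : ζ = -x) (hr : x * Real.exp r = r) (n : ℕ) (s t : ℝ) :
    ∫ u in s..t, Wf ζ r n u = Zf ζ r n t - Zf ζ r n s :=
  intervalIntegral.integral_eq_sub_of_hasDerivAt
    (fun u _ => Zf_hasDeriv ζ x r hx hr n u)
    ((Wf_cont ζ r n).intervalIntegrable s t)

lemma Zf_match (ζ r : ℝ) (n : ℕ) : Zf ζ r (n + 1) (n : ℝ) = Zf ζ r n (n : ℝ) := by
  unfold Zf Yf
  rw [Finset.sum_range_succ]
  have : ((n : ℝ) + 1 - ((n + 1 : ℕ) : ℝ)) = 0 := by push_cast; ring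
  rw [this]
  simp

lemma Wf_split (ζ x r : ℝ) (hx : ζ = -x) (hr : x * Real.exp r = r) (n : ℕ) (t : ℝ) :
    Wf ζ r (n + 1) t =
      r * ((∫ u in (t - 1)..(n : ℝ), Wf ζ r n u) + ∫ u in (n : ℝ)..t, Wf ζ r (n + 1) u) := by
  rw [Zf_ftc ζ x r hx hr n, Zf_ftc ζ x r hx hr (n + 1), Wf]
  rw [Zf_match ζ r n]
  ring

lemma Wf_step_bound (ζ x r : ℝ) (hx : ζ = -x) (hr : x * Real.exp r = r)
    (hr0 : 0 < r) (n : ℕ) (B : ℝ) (hB : 0 ≤ B)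
    (hP : ∀ u ∈ Set.Icc ((n : ℝ) - 1) (n : ℝ), |Wf ζ r n u| ≤ B)
    (t : ℝ) (ht : t ∈ Set.Icc (n : ℝ) ((n : ℝ) + 1))
    (hQ : ∀ s ∈ Set.Ioc (n : ℝ) t, |Wf ζ r (n + 1) s| ≤ B) :
    |Wf ζ r (n + 1) t| ≤ r * B := by
  obtain ⟨ht1, ht2⟩ := ht
  have h1 : |∫ u in (t - 1)..(n : ℝ), Wf ζ r n u| ≤ B * |(n : ℝ) - (t - 1)| := by
    have := intervalIntegral.norm_integral_le_of_norm_le_const (C := B)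
      (f := fun u => Wf ζ r n u) (a := t - 1) (b := (n : ℝ)) ?_
    · simpa using this
    · intro u hu
      rw [Set.uIoc_of_le (by linarith)] at hu
      simpa using hP u ⟨by linarith [hu.1], hu.2⟩
  have h2 : |∫ u in (n : ℝ)..t, Wf ζ r (n + 1) u| ≤ B * |t - (n : ℝ)| := by
    have := intervalIntegral.norm_integral_le_of_norm_le_const (C := B)
      (f := fun u => Wf ζ r (n + 1) u) (a := (n : ℝ)) (b := t) ?_
    · simpa using this
    · intro u hu
      rw [Set.uIoc_of_le (by linarith)] at hu
      simpa using hQ u hu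
  rw [Wf_split ζ x r hx hr n t, abs_mul, abs_of_pos hr0]
  have habs1 : |(n : ℝ) - (t - 1)| = (n : ℝ) - t + 1 := by rw [abs_of_nonneg]; ring_nf; linarith
  have habs2 : |t - (n : ℝ)| = t - (n : ℝ) := abs_of_nonneg (by linarith)
  rw [habs1] at h1; rw [habs2] at h2
  have := abs_add_le (∫ u in (t - 1)..(n : ℝ), Wf ζ r n u) (∫ u in (n : ℝ)..t, Wf ζ r (n + 1) u)
  have hle : |(∫ u in (t - 1)..(n : ℝ), Wf ζ r n u) + ∫ u in (n : ℝ)..t, Wf ζ r (n + 1) u| ≤ B := by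
    calc _ ≤ _ := this
    _ ≤ B * ((n : ℝ) - t + 1) + B * (t - (n : ℝ)) := add_le_add h1 h2
    _ = B := by ring
  calc r * |(∫ u in (t - 1)..(n : ℝ), Wf ζ r n u) + ∫ u in (n : ℝ)..t, Wf ζ r (n + 1) u|
      ≤ r * B := by nlinarith

lemma Wf_bound (ζ x r : ℝ) (hx : ζ = -x) (hr : x * Real.exp r = r)
    (hr0 : 0 < r) (hr1 : r < 1) :
    ∀ n : ℕ, ∀ t ∈ Set.Icc ((n : ℝ) - 1) (n : ℝ), |Wf ζ r n t| ≤ r ^ (n + 1) := by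
  intro n
  induction n with
  | zero =>
      intro t ht
      have : Wf ζ r 0 t = r * Real.exp (r * t) := by
        simp [Wf, Zf, Yf_zero]
      rw [this, abs_mul, abs_of_pos hr0, abs_of_pos (Real.exp_pos _), pow_one]
      have ht0 : t ≤ 0 := by simpa using ht.2
      have : Real.exp (r * t) ≤ 1 := by
        rw [Real.exp_le_one_iff]
        nlinarith
      nlinarith
  | succ n ih =>
      set B := r ^ (n + 1) with hBdef
      have hB0 : 0 < B := pow_pos hr0 _
      have hrB : r * B < B := by nlinarith
      have hIcc : Set.Icc ((((n : ℕ) + 1 : ℕ) : ℝ) - 1) (((n : ℕ) + 1 : ℕ) : ℝ)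
          = Set.Icc ((n : ℝ)) ((n : ℝ) + 1) := by push_cast; norm_num
      rw [hIcc]
      -- first: the weak bound  |W (n+1)| ≤ B  on the interval
      have hQ : ∀ t ∈ Set.Icc ((n : ℝ)) ((n : ℝ) + 1), |Wf ζ r (n + 1) t| ≤ B := by
        by_contra hcon
        push_neg at hcon
        obtain ⟨t₁, ht₁, ht₁B⟩ := hcon
        set A : Set ℝ := {t | t ∈ Set.Icc ((n : ℝ)) ((n : ℝ) + 1) ∧ B ≤ |Wf ζ r (n + 1) t|}
          with hAdef
        have hAne : A.Nonempty := ⟨t₁, ht₁, le_of_lt ht₁B⟩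
        have hAbdd : BddBelow A := (bddBelow_Icc : BddBelow (Set.Icc (n : ℝ) ((n : ℝ) + 1))).mono
          (fun t ht => ht.1)
        have hgcont : Continuous (fun t => |Wf ζ r (n + 1) t|) := (Wf_cont ζ r (n + 1)).abs
        have hAclosed : IsClosed A := by
          have : A = Set.Icc ((n : ℝ)) ((n : ℝ) + 1) ∩ {t | B ≤ |Wf ζ r (n + 1) t|} := rfl
          rw [this]
          exact isClosed_Icc.inter (isClosed_le continuous_const hgcont)
        set t₀ := sInf A with ht₀def
        have ht₀A : t₀ ∈ A := hAclosed.csInf_mem hAne hAbdd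
        have hmin : ∀ s ∈ A, t₀ ≤ s := fun s hs => csInf_le hAbdd hs
        have hlt : ∀ s, (n : ℝ) ≤ s → s < t₀ → |Wf ζ r (n + 1) s| < B := by
          intro s hs1 hs2
          by_contra hge
          push_neg at hge
          have hsA : s ∈ A := ⟨⟨hs1, by linarith [ht₀A.1.2]⟩, hge⟩
          exact absurd (hmin s hsA) (not_le.mpr hs2)
        have hn_not : |Wf ζ r (n + 1) (n : ℝ)| ≤ r * B := by
          apply Wf_step_bound ζ x r hx hr hr0 n B hB0.le ih _ ⟨le_refl _, by linarith⟩
          intro s hs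
          exact absurd hs.1 (not_lt.mpr hs.2)
        have ht₀n : (n : ℝ) < t₀ := by
          rcases lt_or_eq_of_le ht₀A.1.1 with h | h
          · exact h
          · exfalso; rw [← h] at ht₀A; linarith [ht₀A.2]
        have hkey : ∀ t' ∈ Set.Ico ((n : ℝ)) t₀, |Wf ζ r (n + 1) t'| ≤ r * B := by
          intro t' ht'
          apply Wf_step_bound ζ x r hx hr hr0 n B hB0.le ih _
            ⟨ht'.1, by linarith [ht'.2, ht₀A.1.2]⟩
          intro s hs
          exact (hlt s hs.1.le (lt_of_le_of_lt hs.2 ht'.2)).le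
        have hlim : |Wf ζ r (n + 1) t₀| ≤ r * B := by
          have htend : Tendsto (fun t => |Wf ζ r (n + 1) t|) (nhdsWithin t₀ (Set.Iio t₀))
              (nhds (|Wf ζ r (n + 1) t₀|)) :=
            (hgcont.continuousAt).tendsto.mono_left nhdsWithin_le_nhds
          refine le_of_tendsto htend ?_
          filter_upwards [Ioo_mem_nhdsLT ht₀n] with s hs
          exact hkey s ⟨hs.1.le, hs.2⟩
        linarith [ht₀A.2]
      -- now the strong bound
      intro t ht
      have : |Wf ζ r (n + 1) t| ≤ r * B := by
        apply Wf_step_bound ζ x r hx hr hr0 n B hB0.le ih _ ht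
        intro s hs
        exact hQ s ⟨hs.1.le, le_trans hs.2 ht.2⟩
      calc |Wf ζ r (n + 1) t| ≤ r * B := this
        _ = r ^ (n + 1 + 1) := by rw [hBdef]; ring

lemma ft_eq (ζ : ℝ) (m : ℕ) : ftPolyR m ζ = Yf ζ m (m : ℝ) := by
  rw [ftPolyR, ← Finset.sum_range_reflect, Yf]
  refine Finset.sum_congr rfl fun j hj => ?_
  rw [Finset.mem_range] at hj
  have hjm : j ≤ m := Nat.lt_succ_iff.mp hj
  have h1 : m + 1 - 1 - j = m - j := by omega
  have h2 : m - (m - j) = j := by omega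
  rw [h1, h2]
  have h3 : (((m - j + 1 : ℕ)) : ℝ) = (m : ℝ) + 1 - (j : ℝ) := by
    push_cast [Nat.cast_sub hjm]
    ring
  rw [h3, mul_pow]
  ring

lemma Zf_diag_bound (ζ x r : ℝ) (hx : ζ = -x) (hr : x * Real.exp r = r)
    (hr0 : 0 < r) (hr1 : r < 1) (n : ℕ) :
    |Zf ζ r n (n : ℝ)| ≤ 1 + 1 / (1 - r) := by
  have key : ∀ n : ℕ, |Zf ζ r n (n : ℝ)| ≤ 1 + ∑ k ∈ range n, r ^ (k + 2) := by
    intro n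
    induction n with
    | zero => simp [Zf, Yf_zero]
    | succ n ih =>
        have hdiff : Zf ζ r (n + 1) ((n : ℝ) + 1) - Zf ζ r n (n : ℝ)
            = ∫ u in (n : ℝ)..((n : ℝ) + 1), Wf ζ r (n + 1) u := by
          rw [Zf_ftc ζ x r hx hr (n + 1), Zf_match ζ r n]
        have hint : |∫ u in (n : ℝ)..((n : ℝ) + 1), Wf ζ r (n + 1) u| ≤ r ^ (n + 2) := by
          have := intervalIntegral.norm_integral_le_of_norm_le_const (C := r ^ (n + 2))
            (f := fun u => Wf ζ r (n + 1) u) (a := (n : ℝ)) (b := (n : ℝ) + 1) ?_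
          · simpa using this
          · intro u hu
            rw [Set.uIoc_of_le (by linarith)] at hu
            have hu' : u ∈ Set.Icc ((((n + 1) : ℕ) : ℝ) - 1) (((n + 1) : ℕ) : ℝ) := by
              constructor <;> push_cast <;> [linarith [hu.1]; linarith [hu.2]]
            simpa using Wf_bound ζ x r hx hr hr0 hr1 (n + 1) u hu'
        have hcast : ((n + 1 : ℕ) : ℝ) = (n : ℝ) + 1 := by push_cast; ring
        rw [Finset.sum_range_succ]
        calc |Zf ζ r (n + 1) ((n + 1 : ℕ) : ℝ)|
            = |Zf ζ r n (n : ℝ) + (Zf ζ r (n + 1) ((n : ℝ) + 1) - Zf ζ r n (n : ℝ))| := by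
              rw [hcast]; ring_nf
          _ ≤ |Zf ζ r n (n : ℝ)| + |Zf ζ r (n + 1) ((n : ℝ) + 1) - Zf ζ r n (n : ℝ)| :=
              abs_add_le _ _
          _ ≤ (1 + ∑ k ∈ range n, r ^ (k + 2)) + r ^ (n + 2) := by
              rw [hdiff]; exact add_le_add ih hint
          _ = 1 + ((∑ k ∈ range n, r ^ (k + 2)) + r ^ (n + 2)) := by ring
  refine (key n).trans ?_
  have hsum : ∑ k ∈ range n, r ^ (k + 2) ≤ ∑ k ∈ range n, r ^ k := by
    refine Finset.sum_le_sum fun k _ => ?_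
    exact pow_le_pow_of_le_one hr0.le hr1.le (by omega)
  have hgeom : ∑ k ∈ range n, r ^ k ≤ 1 / (1 - r) := by
    rw [geom_sum_eq (by linarith : r ≠ 1)]
    have h3 : (r ^ n - 1) / (r - 1) = (1 - r ^ n) / (1 - r) := by
      rw [div_eq_div_iff (by linarith) (by linarith)]; ring
    rw [h3]
    have hp : (0:ℝ) < 1 - r := by linarith
    have hnum : 1 - r ^ n ≤ 1 := by nlinarith [pow_pos hr0 n]
    exact div_le_div_of_nonneg_right hnum hp.le |>.trans (le_refl _)
  linarith

lemma ft_tendsto (ζ : ℝ) (h₁ : -1 / Real.exp 1 < ζ) (h₂ : ζ < 0) :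
    Tendsto (fun m : ℕ => ftPolyR m ζ) atTop (nhds 0) := by
  set x := -ζ with hxdef
  have hx0 : 0 < x := by simp [hxdef]; linarith
  have hxe : x < 1 / Real.exp 1 := by
    rw [hxdef]
    have : -(1 / Real.exp 1) < ζ := by
      rw [neg_div] at h₁; exact h₁
    linarith
  -- find r ∈ (0,1) with x * exp r = r
  obtain ⟨r, hrIcc, hr⟩ : ∃ r ∈ Set.Icc (0:ℝ) 1, x * Real.exp r - r = 0 := by
    have hcont : ContinuousOn (fun r : ℝ => x * Real.exp r - r) (Set.Icc 0 1) :=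
      ((continuous_const.mul Real.continuous_exp).sub continuous_id).continuousOn
    have h0 : (0:ℝ) < x * Real.exp 0 - 0 := by simpa using hx0
    have h1e : x * Real.exp 1 - 1 < 0 := by
      have : x * Real.exp 1 < (1 / Real.exp 1) * Real.exp 1 := by
        apply mul_lt_mul_of_pos_right hxe (Real.exp_pos 1)
      rw [one_div_mul_cancel (Real.exp_ne_zero 1)] at this
      linarith
    have := intermediate_value_Icc' (by norm_num : (0:ℝ) ≤ 1) hcont
    have hmem : (0:ℝ) ∈ Set.Icc (x * Real.exp 1 - 1) (x * Real.exp 0 - 0) :=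
      ⟨h1e.le, h0.le⟩
    obtain ⟨r, hrmem, hreq⟩ := this hmem
    exact ⟨r, hrmem, hreq⟩
  have hreq : x * Real.exp r = r := by linarith
  have hr0 : 0 < r := by
    rw [← hreq]; positivity
  have hr1 : r < 1 := by
    have he : Real.exp r ≤ Real.exp 1 := Real.exp_le_exp.mpr hrIcc.2
    have h2 : x * Real.exp 1 < 1 := by
      have h4 := mul_lt_mul_of_pos_right hxe (Real.exp_pos 1)
      rwa [one_div_mul_cancel (Real.exp_ne_zero 1)] at h4
    have h3 : x * Real.exp r ≤ x * Real.exp 1 := mul_le_mul_of_nonneg_left he hx0.le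
    calc r = x * Real.exp r := hreq.symm
      _ ≤ x * Real.exp 1 := h3
      _ < 1 := h2
  have hxz : ζ = -x := by rw [hxdef]; ring
  set C := 1 + 1 / (1 - r) with hC
  have hbound : ∀ m : ℕ, |ftPolyR m ζ| ≤ C * Real.exp (-(r * m)) := by
    intro m
    have h1 : ftPolyR m ζ = Real.exp (-(r * m)) * Zf ζ r m (m : ℝ) := by
      rw [ft_eq, Zf, ← mul_assoc, ← Real.exp_add]
      simp
    rw [h1, abs_mul, abs_of_pos (Real.exp_pos _)]
    have hZ : |Zf ζ r m (m : ℝ)| ≤ C := by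
      rw [hC]; exact Zf_diag_bound ζ x r hxz hreq hr0 hr1 m
    have hep : (0:ℝ) ≤ Real.exp (-(r * m)) := (Real.exp_pos _).le
    calc Real.exp (-(r * m)) * |Zf ζ r m (m : ℝ)|
        ≤ Real.exp (-(r * m)) * C := mul_le_mul_of_nonneg_left hZ hep
      _ = C * Real.exp (-(r * m)) := by ring
  apply squeeze_zero_norm hbound
  rw [show (0:ℝ) = C * 0 by ring]
  apply Tendsto.const_mul
  apply Real.tendsto_exp_atBot.comp
  exact (tendsto_neg_atBot_iff.mpr) (tendsto_natCast_atTop_atTop.const_mul_atTop hr0)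

/-- For every real `ζ ∈ (−1/e, 0)`, the sequence `p̃_n(ζ) = f̃_n(ζ) + f̃_{n−1}(ζ)` tends
to `0` as `n → ∞`; in particular there is no uniform positive lower bound on `p̃_n(ζ)`
over `n`.  This refutes Buvoli's limiting-stability conjecture. -/
theorem ptilde_tendsto_zero (ζ : ℝ) (h₁ : -1 / Real.exp 1 < ζ) (h₂ : ζ < 0) :
    Tendsto (fun n : ℕ => ftPolyR (n + 1) ζ + ftPolyR n ζ) atTop (nhds 0) ∧
    ¬ ∃ c : ℝ, 0 < c ∧ ∀ n : ℕ, 1 ≤ n → c ≤ ftPolyR n ζ + ftPolyR (n - 1) ζ := by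
  have htend := ft_tendsto ζ h₁ h₂
  have htend1 : Tendsto (fun n : ℕ => ftPolyR (n + 1) ζ) atTop (nhds 0) :=
    htend.comp (tendsto_add_atTop_nat 1)
  have hmain : Tendsto (fun n : ℕ => ftPolyR (n + 1) ζ + ftPolyR n ζ) atTop (nhds 0) := by
    simpa using htend1.add htend
  refine ⟨hmain, ?_⟩
  rintro ⟨c, hc, hlb⟩
  have hev : ∀ᶠ n : ℕ in atTop, ftPolyR (n + 1) ζ + ftPolyR n ζ < c :=
    (hmain.eventually (eventually_lt_nhds hc)).mono (fun n h => h)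
  obtain ⟨n, hn⟩ := hev.exists
  have := hlb (n + 1) (by omega)
  simp only [Nat.add_sub_cancel] at this
  linarith
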